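/- Let T be the Grothendieck site whose objects are the open intervals X_n = ((3^n−1)/(2·3^n), (3^n+1)/(2·3^n)), U_n = ((3^n−1)/(2·3^n), (3^{n+1}+1)/(2·3^{n+1})), and V_n = ((3^{n+1}−1)/(2·3^{n+1}), (3^n+1)/(2·3^n)) of (0,1), with morphisms the inclusions and covers the jointly surjective families. Then every covering family of U_n contains the identity of U_n, and every covering family of V_n contains the identity of V_n; consequently the representable sheaves h_{U_n} and h_{V_n} are weakly contractible (projective) objects of Shv(T), and every object Z of T admits a cover by U_n ⊔ V_n for some n, so Shv(T) is locally weakly contractible. -/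

import Mathlib

open CategoryTheory Limits Opposite Set

/-- The interval `X_n = ((3^n−1)/(2·3^n), (3^n+1)/(2·3^n))`. -/
def Xset (n : ℕ) : Set ℝ := Ioo ((3 ^ n - 1) / (2 * 3 ^ n)) ((3 ^ n + 1) / (2 * 3 ^ n))

/-- The interval `U_n = ((3^n−1)/(2·3^n), (3^{n+1}+1)/(2·3^{n+1}))`. -/
def Uset (n : ℕ) : Set ℝ :=
  Ioo ((3 ^ n - 1) / (2 * 3 ^ n)) ((3 ^ (n + 1) + 1) / (2 * 3 ^ (n + 1)))

/-- The interval `V_n = ((3^{n+1}−1)/(2·3^{n+1}), (3^n+1)/(2·3^n))`. -/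
def Vset (n : ℕ) : Set ℝ :=
  Ioo ((3 ^ (n + 1) - 1) / (2 * 3 ^ (n + 1))) ((3 ^ n + 1) / (2 * 3 ^ n))

/-- The underlying poset of the site of Dugger–Hollander–Isaksen: the subsets
`X_n`, `U_n`, `V_n` of `(0,1)`, ordered by inclusion. -/
def DHI : Type := {S : Set ℝ // ∃ n : ℕ, S = Xset n ∨ S = Uset n ∨ S = Vset n}

instance : PartialOrder DHI := Subtype.partialOrder _

instance : SmallCategory DHI := Preorder.smallCategory DHI

/-- `h^♯`: Yoneda followed by sheafification. -/
noncomputable def hSharp (J : GrothendieckTopology DHI) : DHI ⥤ Sheaf J (Type 0) :=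
  yoneda ⋙ presheafToSheaf J (Type 0)

/-- An object `Y` of a topos is weakly contractible if every epimorphism onto `Y`
splits. -/
def WeaklyContractible {D : Type*} [Category D] (Y : D) : Prop :=
  ∀ (G : D) (φ : G ⟶ Y), Epi φ → ∃ s : Y ⟶ G, s ≫ φ = 𝟙 Y

-- auxiliary endpoints
noncomputable def Apt (n : ℕ) : ℝ := (3 ^ n - 1) / (2 * 3 ^ n)
noncomputable def Bpt (n : ℕ) : ℝ := (3 ^ n + 1) / (2 * 3 ^ n)

lemma Xset_eq (n : ℕ) : Xset n = Ioo (Apt n) (Bpt n) := rfl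
lemma Uset_eq (n : ℕ) : Uset n = Ioo (Apt n) (Bpt (n + 1)) := rfl
lemma Vset_eq (n : ℕ) : Vset n = Ioo (Apt (n + 1)) (Bpt n) := rfl

lemma A_le_A {m n : ℕ} : Apt m ≤ Apt n ↔ m ≤ n := by
  unfold Apt
  rw [div_le_div_iff₀ (by positivity) (by positivity)]
  constructor
  · intro h
    have h3 : (3:ℝ) ^ m ≤ 3 ^ n := by nlinarith [pow_pos (by norm_num : (0:ℝ) < 3) m, pow_pos (by norm_num : (0:ℝ) < 3) n]
    exact (pow_le_pow_iff_right₀ (by norm_num : (1:ℝ) < 3)).mp h3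
  · intro h
    have h3 : (3:ℝ) ^ m ≤ 3 ^ n := pow_le_pow_right₀ (by norm_num) h
    nlinarith [pow_pos (by norm_num : (0:ℝ) < 3) m, pow_pos (by norm_num : (0:ℝ) < 3) n]

lemma B_le_B {m n : ℕ} : Bpt m ≤ Bpt n ↔ n ≤ m := by
  unfold Bpt
  rw [div_le_div_iff₀ (by positivity) (by positivity)]
  constructor
  · intro h
    have h3 : (3:ℝ) ^ n ≤ 3 ^ m := by nlinarith [pow_pos (by norm_num : (0:ℝ) < 3) m, pow_pos (by norm_num : (0:ℝ) < 3) n]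
    exact (pow_le_pow_iff_right₀ (by norm_num : (1:ℝ) < 3)).mp h3
  · intro h
    have h3 : (3:ℝ) ^ n ≤ 3 ^ m := pow_le_pow_right₀ (by norm_num) h
    nlinarith [pow_pos (by norm_num : (0:ℝ) < 3) m, pow_pos (by norm_num : (0:ℝ) < 3) n]

lemma A_lt_A {m n : ℕ} : Apt m < Apt n ↔ m < n := by
  rw [← not_le, ← not_le, not_iff_not, A_le_A]

lemma B_lt_B {m n : ℕ} : Bpt m < Bpt n ↔ n < m := by
  rw [← not_le, ← not_le, not_iff_not, B_le_B]

lemma A_lt_B (m n : ℕ) : Apt m < Bpt n := by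
  unfold Apt Bpt
  rw [div_lt_div_iff₀ (by positivity) (by positivity)]
  nlinarith [pow_pos (by norm_num : (0:ℝ) < 3) m, pow_pos (by norm_num : (0:ℝ) < 3) n]

lemma sub_U {n : ℕ} (d : DHI) (hd : d.1 ⊆ Uset n) (hx : Apt (n + 1) ∈ d.1) :
    d.1 = Uset n := by
  obtain ⟨m, h | h | h⟩ := d.2 <;> rw [h] at hd hx ⊢
  · rw [Xset_eq, Uset_eq] at hd
    obtain ⟨h1, h2⟩ := (Ioo_subset_Ioo_iff (A_lt_B m m)).mp hd
    rw [Xset_eq, mem_Ioo] at hx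
    have := B_le_B.mp h2
    have := A_lt_A.mp hx.1
    omega
  · rw [Uset_eq, Uset_eq] at hd
    obtain ⟨h1, h2⟩ := (Ioo_subset_Ioo_iff (A_lt_B m (m + 1))).mp hd
    rw [Uset_eq, mem_Ioo] at hx
    have h3 := B_le_B.mp h2
    have h4 := A_lt_A.mp hx.1
    have : m = n := by omega
    rw [this]
  · rw [Vset_eq, Uset_eq] at hd
    obtain ⟨h1, h2⟩ := (Ioo_subset_Ioo_iff (A_lt_B (m + 1) m)).mp hd
    rw [Vset_eq, mem_Ioo] at hx
    have := B_le_B.mp h2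
    have := A_lt_A.mp hx.1
    omega

lemma sub_V {n : ℕ} (d : DHI) (hd : d.1 ⊆ Vset n) (hx : Bpt (n + 1) ∈ d.1) :
    d.1 = Vset n := by
  obtain ⟨m, h | h | h⟩ := d.2 <;> rw [h] at hd hx ⊢
  · rw [Xset_eq, Vset_eq] at hd
    obtain ⟨h1, h2⟩ := (Ioo_subset_Ioo_iff (A_lt_B m m)).mp hd
    rw [Xset_eq, mem_Ioo] at hx
    have := A_le_A.mp h1
    have := B_lt_B.mp hx.2
    omega
  · rw [Uset_eq, Vset_eq] at hd
    obtain ⟨h1, h2⟩ := (Ioo_subset_Ioo_iff (A_lt_B m (m + 1))).mp hd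
    rw [Uset_eq, mem_Ioo] at hx
    have := A_le_A.mp h1
    have := B_lt_B.mp hx.2
    omega
  · rw [Vset_eq, Vset_eq] at hd
    obtain ⟨h1, h2⟩ := (Ioo_subset_Ioo_iff (A_lt_B (m + 1) m)).mp hd
    rw [Vset_eq, mem_Ioo] at hx
    have h3 := B_le_B.mp h2
    have h4 := B_lt_B.mp hx.2
    have : m = n := by omega
    rw [this]

lemma id_mem_U (J : GrothendieckTopology DHI)
    (hJ : ∀ (c : DHI) (S : Sieve c),
      S ∈ J c ↔ ∀ x ∈ c.1, ∃ (d : DHI) (f : d ⟶ c), S.arrows f ∧ x ∈ d.1)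
    (n : ℕ) (U : DHI) (hU : U.1 = Uset n) :
    ∀ S : Sieve U, S ∈ J U → S.arrows (𝟙 U) := by
  intro S hS
  obtain ⟨d, f, hSf, hxd⟩ := (hJ U S).mp hS (Apt (n + 1))
    (by rw [hU, Uset_eq, mem_Ioo]; exact ⟨A_lt_A.mpr (Nat.lt_succ_self n), A_lt_B _ _⟩)
  have hd : d.1 ⊆ Uset n := by
    have := leOfHom f
    rw [← hU]
    exact this
  obtain rfl : d = U := Subtype.ext ((sub_U d hd hxd).trans hU.symm)
  rwa [Subsingleton.elim (𝟙 d) f]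

lemma id_mem_V (J : GrothendieckTopology DHI)
    (hJ : ∀ (c : DHI) (S : Sieve c),
      S ∈ J c ↔ ∀ x ∈ c.1, ∃ (d : DHI) (f : d ⟶ c), S.arrows f ∧ x ∈ d.1)
    (n : ℕ) (V : DHI) (hV : V.1 = Vset n) :
    ∀ S : Sieve V, S ∈ J V → S.arrows (𝟙 V) := by
  intro S hS
  obtain ⟨d, f, hSf, hxd⟩ := (hJ V S).mp hS (Bpt (n + 1))
    (by rw [hV, Vset_eq, mem_Ioo]; exact ⟨A_lt_B _ _, B_lt_B.mpr (Nat.lt_succ_self n)⟩)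
  have hd : d.1 ⊆ Vset n := by
    have := leOfHom f
    rw [← hV]
    exact this
  obtain rfl : d = V := Subtype.ext ((sub_V d hd hxd).trans hV.symm)
  rwa [Subsingleton.elim (𝟙 d) f]

lemma wc (J : GrothendieckTopology DHI) (U : DHI)
    (hU : ∀ S : Sieve U, S ∈ J U → S.arrows (𝟙 U)) :
    WeaklyContractible ((hSharp J).obj U) := by
  intro G φ hφ
  haveI hls : Presheaf.IsLocallySurjective J φ.hom :=
    (Sheaf.isLocallySurjective_iff_epi φ).mpr hφ
  let ζ : ((hSharp J).obj U).val.obj (op U) :=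
    (toSheafify J (yoneda.obj U)).app (op U) (𝟙 U)
  obtain ⟨t, ht⟩ := hU _ (Presheaf.imageSieve_mem J φ.hom ζ)
  simp only [op_id, FunctorToTypes.map_id_apply] at ht
  refine ⟨⟨sheafifyLift J (yonedaEquiv.symm t) G.cond⟩, ?_⟩
  apply Sheaf.hom_ext
  change sheafifyLift J (yonedaEquiv.symm t) G.cond ≫ φ.hom = 𝟙 _
  apply sheafify_hom_ext J _ _ ((hSharp J).obj U).cond
  rw [toSheafify_sheafifyLift_assoc]
  erw [Category.comp_id]
  apply yonedaEquiv.injective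
  rw [yonedaEquiv_comp, Equiv.apply_symm_apply]
  exact ht


/-- On the Dugger–Hollander–Isaksen site (with covers the jointly surjective
families): every covering sieve of `U_n` (resp. `V_n`) contains the identity; the
representable sheaves `h_{U_n}`, `h_{V_n}` are weakly contractible; and every object
admits a cover by `U_n` and `V_n` for some `n`.  Hence `Shv(T)` is locally weakly
contractible. -/
theorem stmt_15 (J : GrothendieckTopology DHI)
    (hJ : ∀ (c : DHI) (S : Sieve c),
      S ∈ J c ↔ ∀ x ∈ c.1, ∃ (d : DHI) (f : d ⟶ c), S.arrows f ∧ x ∈ d.1)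
    (n : ℕ) (U V : DHI) (hU : U.1 = Uset n) (hV : V.1 = Vset n) :
    (∀ S : Sieve U, S ∈ J U → S.arrows (𝟙 U)) ∧
    (∀ S : Sieve V, S ∈ J V → S.arrows (𝟙 V)) ∧
    WeaklyContractible ((hSharp J).obj U) ∧
    WeaklyContractible ((hSharp J).obj V) ∧
    (∀ Z : DHI, ∃ m : ℕ,
      Sieve.generate (fun d (_ : d ⟶ Z) => d.1 = Uset m ∨ d.1 = Vset m) ∈ J Z) := by
  refine ⟨id_mem_U J hJ n U hU, id_mem_V J hJ n V hV,
    wc J U (id_mem_U J hJ n U hU), wc J V (id_mem_V J hJ n V hV), ?_⟩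
  intro Z
  obtain ⟨m, hZ | hZ | hZ⟩ := Z.2
  · refine ⟨m, (hJ Z _).mpr ?_⟩
    intro x hx
    rw [hZ, Xset_eq, mem_Ioo] at hx
    by_cases hc : x < Bpt (m + 1)
    · have hle : (⟨Uset m, m, Or.inr (Or.inl rfl)⟩ : DHI) ≤ Z := by
        change Uset m ⊆ Z.1
        rw [hZ, Uset_eq, Xset_eq]
        exact Ioo_subset_Ioo le_rfl (B_le_B.mpr (Nat.le_succ m))
      exact ⟨_, homOfLE hle, ⟨_, 𝟙 _, homOfLE hle, Or.inl rfl, Subsingleton.elim _ _⟩,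
        ⟨hx.1, hc⟩⟩
    · have hle : (⟨Vset m, m, Or.inr (Or.inr rfl)⟩ : DHI) ≤ Z := by
        change Vset m ⊆ Z.1
        rw [hZ, Vset_eq, Xset_eq]
        exact Ioo_subset_Ioo (A_le_A.mpr (Nat.le_succ m)) le_rfl
      exact ⟨_, homOfLE hle, ⟨_, 𝟙 _, homOfLE hle, Or.inr rfl, Subsingleton.elim _ _⟩,
        ⟨lt_of_lt_of_le (A_lt_B _ _) (not_lt.mp hc), hx.2⟩⟩
  · refine ⟨m, (hJ Z _).mpr ?_⟩
    intro x hx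
    have hle : (⟨Uset m, m, Or.inr (Or.inl rfl)⟩ : DHI) ≤ Z := by
      change Uset m ⊆ Z.1
      rw [hZ]
    exact ⟨_, homOfLE hle, ⟨_, 𝟙 _, homOfLE hle, Or.inl rfl, Subsingleton.elim _ _⟩,
      by rw [hZ] at hx; exact hx⟩
  · refine ⟨m, (hJ Z _).mpr ?_⟩
    intro x hx
    have hle : (⟨Vset m, m, Or.inr (Or.inr rfl)⟩ : DHI) ≤ Z := by
      change Vset m ⊆ Z.1
      rw [hZ]
    exact ⟨_, homOfLE hle, ⟨_, 𝟙 _, homOfLE hle, Or.inr rfl, Subsingleton.elim _ _⟩,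
      by rw [hZ] at hx; exact hx⟩
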